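/- For every d-space (X, dX), the pair (X, d̂X), where d̂X is the set of weakly directed paths of (X, dX), is again a d-space (constant paths are weakly directed, weakly directed paths are closed under concatenation and under precomposition with continuous non-decreasing maps I → I), and moreover dX ⊆ d̂X. -/

import Mathlib

open unitInterval Topology Set

/-- Concatenation of two continuous paths `p q : C(I, X)` with `p 1 = q 0`,
traversing `p` on `[0, 1/2]` and `q` on `[1/2, 1]` (both at double speed). -/
noncomputable def concatPath {X : Type*} [TopologicalSpace X]
    (p q : C(unitInterval, X)) (h : p 1 = q 0) : C(unitInterval, X) :=
  ((⟨p, rfl, rfl⟩ : Path (p 0) (p 1)).trans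
    ((⟨q, rfl, rfl⟩ : Path (q 0) (q 1)).cast h rfl)).toContinuousMap

/-- A d-space structure on a topological space `X`: a set of continuous paths
`I → X` containing the constant paths, closed under concatenation and under
precomposition with continuous non-decreasing maps `I → I`. -/
structure DSpace (X : Type*) [TopologicalSpace X] where
  d : Set C(unitInterval, X)
  const_mem : ∀ x : X, ContinuousMap.const unitInterval x ∈ d
  concat_mem : ∀ p ∈ d, ∀ q ∈ d, ∀ h : p 1 = q 0, concatPath p q h ∈ d
  reparam_mem : ∀ p ∈ d, ∀ φ : C(unitInterval, unitInterval), Monotone ⇑φ → p.comp φ ∈ d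

/-- `c` is a directed function on the (open) set `U` for the set of directed
paths `d`: it is continuous on `U` and non-decreasing along every directed path
with image contained in `U`. -/
def IsDirectedFn {X : Type*} [TopologicalSpace X] (d : Set C(unitInterval, X))
    (U : Set X) (c : X → unitInterval) : Prop :=
  ContinuousOn c U ∧ ∀ p ∈ d, Set.range ⇑p ⊆ U → Monotone (c ∘ ⇑p)

/-- A path `p` is weakly directed when, for every directed function `c` on an
open `U`, the map `c ∘ p` is locally non-decreasing on `p ⁻¹' U`. -/
def IsWeaklyDirected {X : Type*} [TopologicalSpace X] (d : Set C(unitInterval, X))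
    (p : C(unitInterval, X)) : Prop :=
  ∀ U : Set X, IsOpen U → ∀ c : X → unitInterval, IsDirectedFn d U c →
    ∀ t : unitInterval, p t ∈ U →
      ∃ V ∈ 𝓝 t, V ⊆ ⇑p ⁻¹' U ∧ MonotoneOn (c ∘ ⇑p) V

/-- The set `d̂X` of weakly directed paths. -/
def satPaths {X : Type*} [TopologicalSpace X] (d : Set C(unitInterval, X)) :
    Set C(unitInterval, X) :=
  {p | IsWeaklyDirected d p}

/-- A set of directed paths is saturated when every weakly directed path is directed. -/
def IsSaturated {X : Type*} [TopologicalSpace X] (d : Set C(unitInterval, X)) : Prop :=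
  satPaths d = d


noncomputable def sig1 (t : unitInterval) : unitInterval :=
  Set.projIcc (0:ℝ) 1 zero_le_one (2 * (t:ℝ))

noncomputable def sig2 (t : unitInterval) : unitInterval :=
  Set.projIcc (0:ℝ) 1 zero_le_one (2 * (t:ℝ) - 1)

lemma sig1_continuous : Continuous sig1 :=
  continuous_projIcc.comp (by fun_prop)

lemma sig2_continuous : Continuous sig2 :=
  continuous_projIcc.comp (by fun_prop)

lemma sig1_monotone : Monotone sig1 := by
  intro a b hab
  unfold sig1
  apply monotone_projIcc
  have : (a:ℝ) ≤ b := hab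
  linarith

lemma sig2_monotone : Monotone sig2 := by
  intro a b hab
  unfold sig2
  apply monotone_projIcc
  have : (a:ℝ) ≤ b := hab
  linarith

lemma sig1_of_le {t : unitInterval} (h : (t:ℝ) ≤ 1/2) :
    sig1 t = ⟨2 * (t:ℝ), ⟨mul_nonneg (by norm_num) t.2.1, by linarith⟩⟩ := by
  unfold sig1
  rw [Set.projIcc_of_mem]
  exact ⟨mul_nonneg (by norm_num) t.2.1, by linarith⟩

lemma sig2_of_ge {t : unitInterval} (h : 1/2 ≤ (t:ℝ)) :
    sig2 t = ⟨2 * (t:ℝ) - 1, ⟨by linarith, by have := t.2.2; linarith⟩⟩ := by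
  unfold sig2
  rw [Set.projIcc_of_mem]
  exact ⟨by linarith, by have := t.2.2; linarith⟩

lemma sig1_half {t : unitInterval} (h : (t:ℝ) = 1/2) : sig1 t = 1 := by
  rw [sig1_of_le h.le]
  ext
  show 2 * (t:ℝ) = ((1 : unitInterval) : ℝ)
  rw [h]; norm_num

lemma sig2_half {t : unitInterval} (h : (t:ℝ) = 1/2) : sig2 t = 0 := by
  rw [sig2_of_ge h.ge]
  ext
  show 2 * (t:ℝ) - 1 = ((0 : unitInterval) : ℝ)
  rw [h]; norm_num

lemma concatPath_apply_left {X : Type*} [TopologicalSpace X]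
    (p q : C(unitInterval, X)) (h : p 1 = q 0) {t : unitInterval}
    (ht : (t:ℝ) ≤ 1/2) : concatPath p q h t = p (sig1 t) := by
  rw [sig1_of_le ht]
  show (((⟨p, rfl, rfl⟩ : Path (p 0) (p 1)).trans
    ((⟨q, rfl, rfl⟩ : Path (q 0) (q 1)).cast h rfl)) t) = _
  rw [Path.trans_apply, dif_pos ht]
  rfl

lemma concatPath_apply_right {X : Type*} [TopologicalSpace X]
    (p q : C(unitInterval, X)) (h : p 1 = q 0) {t : unitInterval}
    (ht : 1/2 ≤ (t:ℝ)) : concatPath p q h t = q (sig2 t) := by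
  rcases eq_or_lt_of_le ht with heq | hlt
  · rw [sig2_half heq.symm]
    rw [concatPath_apply_left p q h heq.ge, sig1_half heq.symm, h]
  · rw [sig2_of_ge ht]
    show (((⟨p, rfl, rfl⟩ : Path (p 0) (p 1)).trans
      ((⟨q, rfl, rfl⟩ : Path (q 0) (q 1)).cast h rfl)) t) = _
    rw [Path.trans_apply, dif_neg (not_le.mpr hlt)]
    rfl

/-- For any d-space `(X, dX)`, the weakly directed paths `d̂X` again form a d-space
structure on `X` (constants, concatenation, reparametrisation), and `dX ⊆ d̂X`. -/
theorem stmt_2 {X : Type*} [TopologicalSpace X] (D : DSpace X) :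
    (∀ x : X, ContinuousMap.const unitInterval x ∈ satPaths D.d) ∧
    (∀ p ∈ satPaths D.d, ∀ q ∈ satPaths D.d, ∀ h : p 1 = q 0,
      concatPath p q h ∈ satPaths D.d) ∧
    (∀ p ∈ satPaths D.d, ∀ φ : C(unitInterval, unitInterval), Monotone ⇑φ →
      p.comp φ ∈ satPaths D.d) ∧
    D.d ⊆ satPaths D.d := by
  refine ⟨?_, ?_, ?_, ?_⟩
  · -- constants
    intro x U hU c hc t hxt
    exact ⟨univ, Filter.univ_mem, fun s _ => hxt,
      fun s _ u _ _ => le_refl _⟩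
  · -- concatenation
    intro p hp q hq h U hU c hc t ht
    rcases lt_trichotomy ((t:ℝ)) (1/2) with hlt | heq | hgt
    · -- left half
      have htU : p (sig1 t) ∈ U := by rwa [concatPath_apply_left p q h hlt.le] at ht
      obtain ⟨V, hVnhds, hVsub, hVmono⟩ := hp U hU c hc (sig1 t) htU
      refine ⟨sig1 ⁻¹' V ∩ {s | (s:ℝ) ≤ 1/2}, ?_, ?_, ?_⟩
      · refine Filter.inter_mem (sig1_continuous.continuousAt.preimage_mem_nhds hVnhds) ?_
        exact Filter.mem_of_superset
          (IsOpen.mem_nhds (isOpen_lt continuous_subtype_val continuous_const) hlt)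
          (fun s (hs : (s:ℝ) < 1/2) => le_of_lt hs)
      · rintro s ⟨hs1, hs2⟩
        rw [Set.mem_preimage, concatPath_apply_left p q h hs2]
        exact hVsub hs1
      · rintro s ⟨hs1, hs2⟩ u ⟨hu1, hu2⟩ hsu
        simp only [Function.comp_apply, concatPath_apply_left p q h hs2,
          concatPath_apply_left p q h hu2]
        exact hVmono hs1 hu1 (sig1_monotone hsu)
    · -- midpoint
      have ht1 : p 1 ∈ U := by rwa [concatPath_apply_left p q h heq.le, sig1_half heq] at ht
      have ht0 : q 0 ∈ U := h ▸ ht1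
      obtain ⟨Vp, hVpnhds, hVpsub, hVpmono⟩ := hp U hU c hc 1 ht1
      obtain ⟨Vq, hVqnhds, hVqsub, hVqmono⟩ := hq U hU c hc 0 ht0
      have h1 : sig1 t = 1 := sig1_half heq
      have h0 : sig2 t = 0 := sig2_half heq
      refine ⟨sig1 ⁻¹' Vp ∩ sig2 ⁻¹' Vq, ?_, ?_, ?_⟩
      · exact Filter.inter_mem
          (sig1_continuous.continuousAt.preimage_mem_nhds (h1 ▸ hVpnhds))
          (sig2_continuous.continuousAt.preimage_mem_nhds (h0 ▸ hVqnhds))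
      · rintro s ⟨hs1, hs2⟩
        rcases le_total ((s:ℝ)) (1/2) with hs | hs
        · rw [Set.mem_preimage, concatPath_apply_left p q h hs]; exact hVpsub hs1
        · rw [Set.mem_preimage, concatPath_apply_right p q h hs]; exact hVqsub hs2
      · rintro s ⟨hs1, hs2⟩ u ⟨hu1, hu2⟩ hsu
        rcases le_total ((u:ℝ)) (1/2) with hu | hu
        · have hs : (s:ℝ) ≤ 1/2 := le_trans hsu hu
          simp only [Function.comp_apply, concatPath_apply_left p q h hs,
            concatPath_apply_left p q h hu]
          exact hVpmono hs1 hu1 (sig1_monotone hsu)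
        · rcases le_total ((s:ℝ)) (1/2) with hs | hs
          · simp only [Function.comp_apply, concatPath_apply_left p q h hs,
              concatPath_apply_right p q h hu]
            calc c (p (sig1 s)) ≤ c (p 1) :=
                  hVpmono hs1 (mem_of_mem_nhds hVpnhds) (sig1 s).2.2
              _ = c (q 0) := by rw [h]
              _ ≤ c (q (sig2 u)) :=
                  hVqmono (mem_of_mem_nhds hVqnhds) hu2 (sig2 u).2.1
          · simp only [Function.comp_apply, concatPath_apply_right p q h hs,
              concatPath_apply_right p q h hu]
            exact hVqmono hs2 hu2 (sig2_monotone hsu)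
    · -- right half
      have htU : q (sig2 t) ∈ U := by rwa [concatPath_apply_right p q h hgt.le] at ht
      obtain ⟨V, hVnhds, hVsub, hVmono⟩ := hq U hU c hc (sig2 t) htU
      refine ⟨sig2 ⁻¹' V ∩ {s | 1/2 ≤ (s:ℝ)}, ?_, ?_, ?_⟩
      · refine Filter.inter_mem (sig2_continuous.continuousAt.preimage_mem_nhds hVnhds) ?_
        exact Filter.mem_of_superset
          (IsOpen.mem_nhds (isOpen_lt continuous_const continuous_subtype_val) hgt)
          (fun s (hs : (1:ℝ)/2 < (s:ℝ)) => le_of_lt hs)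
      · rintro s ⟨hs1, hs2⟩
        rw [Set.mem_preimage, concatPath_apply_right p q h hs2]
        exact hVsub hs1
      · rintro s ⟨hs1, hs2⟩ u ⟨hu1, hu2⟩ hsu
        simp only [Function.comp_apply, concatPath_apply_right p q h hs2,
          concatPath_apply_right p q h hu2]
        exact hVmono hs1 hu1 (sig2_monotone hsu)
  · -- reparametrisation
    intro p hp φ hφ U hU c hc t ht
    obtain ⟨V, hVnhds, hVsub, hVmono⟩ := hp U hU c hc (φ t) ht
    refine ⟨φ ⁻¹' V, φ.continuous.continuousAt.preimage_mem_nhds hVnhds, ?_, ?_⟩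
    · intro s hs; exact hVsub hs
    · intro s hs u hu hsu
      exact hVmono hs hu (hφ hsu)
  · -- dX ⊆ satPaths dX
    intro p hp U hU c hc t ht
    have hUmem : (⇑p ⁻¹' U) ∈ 𝓝 t :=
      p.continuous.continuousAt.preimage_mem_nhds (hU.mem_nhds ht)
    obtain ⟨a, b, htab, habnhds, habsub⟩ := exists_Icc_mem_subset_of_mem_nhds hUmem
    have hab : (a:ℝ) ≤ b := le_trans htab.1 htab.2
    have key : ∀ s : unitInterval, (a:ℝ) + s * ((b:ℝ) - a) ∈ Set.Icc (0:ℝ) 1 := by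
      intro s
      constructor
      · have := a.2.1
        have : 0 ≤ (s:ℝ) * ((b:ℝ) - a) := mul_nonneg s.2.1 (by linarith)
        have := a.2.1; linarith
      · have h1 : (s:ℝ) * ((b:ℝ) - a) ≤ (b:ℝ) - a := by
          nlinarith [s.2.2, s.2.1]
        have := b.2.2; linarith
    set ψfun : unitInterval → unitInterval := fun s => ⟨(a:ℝ) + s * ((b:ℝ) - a), key s⟩
    have hψcont : Continuous ψfun := by
      apply Continuous.subtype_mk; fun_prop
    have hψmono : Monotone ψfun := by
      intro s u hsu
      show (a:ℝ) + s * ((b:ℝ) - a) ≤ (a:ℝ) + u * ((b:ℝ) - a)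
      have : (s:ℝ) ≤ u := hsu
      nlinarith
    have hψmem : ∀ s, ψfun s ∈ Set.Icc a b := by
      intro s
      constructor
      · show (a:ℝ) ≤ (a:ℝ) + s * ((b:ℝ) - a)
        nlinarith [s.2.1, s.2.2]
      · show (a:ℝ) + s * ((b:ℝ) - a) ≤ (b:ℝ)
        nlinarith [s.2.1, s.2.2]
    have hmem : p.comp ⟨ψfun, hψcont⟩ ∈ D.d := D.reparam_mem p hp _ hψmono
    have hrange : Set.range ⇑(p.comp ⟨ψfun, hψcont⟩) ⊆ U := by
      rintro x ⟨s, rfl⟩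
      exact habsub (hψmem s)
    have hmono := hc.2 _ hmem hrange
    refine ⟨Set.Icc a b, habnhds, habsub, ?_⟩
    rcases eq_or_lt_of_le hab with haeqb | hadltb
    · intro x hx y hy _
      have hx' : x = a := le_antisymm (by exact_mod_cast haeqb ▸ (show (x:ℝ) ≤ b from hx.2)) hx.1
      have hy' : y = a := le_antisymm (by exact_mod_cast haeqb ▸ (show (y:ℝ) ≤ b from hy.2)) hy.1
      rw [hx', hy']
    · intro x hx y hy hxy
      have hx1 : ((x:ℝ) - a) / ((b:ℝ) - a) ∈ Set.Icc (0:ℝ) 1 := by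
        constructor
        · apply div_nonneg (by have : (a:ℝ) ≤ x := hx.1; linarith) (by linarith)
        · rw [div_le_one (by linarith)]
          have : (x:ℝ) ≤ b := hx.2; linarith
      have hy1 : ((y:ℝ) - a) / ((b:ℝ) - a) ∈ Set.Icc (0:ℝ) 1 := by
        constructor
        · apply div_nonneg (by have : (a:ℝ) ≤ y := hy.1; linarith) (by linarith)
        · rw [div_le_one (by linarith)]
          have : (y:ℝ) ≤ b := hy.2; linarith
      have hψx : ψfun ⟨_, hx1⟩ = x := by
        ext
        show (a:ℝ) + ((x:ℝ) - a) / ((b:ℝ) - a) * ((b:ℝ) - a) = x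
        rw [div_mul_cancel₀ _ (show (b:ℝ) - (a:ℝ) ≠ 0 by linarith)]
        ring
      have hψy : ψfun ⟨_, hy1⟩ = y := by
        ext
        show (a:ℝ) + ((y:ℝ) - a) / ((b:ℝ) - a) * ((b:ℝ) - a) = y
        rw [div_mul_cancel₀ _ (show (b:ℝ) - (a:ℝ) ≠ 0 by linarith)]
        ring
      have hle : (⟨_, hx1⟩ : unitInterval) ≤ ⟨_, hy1⟩ := by
        show ((x:ℝ) - a) / ((b:ℝ) - a) ≤ ((y:ℝ) - a) / ((b:ℝ) - a)
        have hxy' : (x:ℝ) ≤ y := hxy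
        gcongr <;> linarith
      have := hmono hle
      simp only [ContinuousMap.comp_apply, ContinuousMap.coe_mk, Function.comp_apply] at this
      rw [hψx, hψy] at this
      exact this
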